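/- On the null-shell chart U of the Schwarzschild exterior of mass M, the following two Lie bracket identities hold at every point of U: [𝕏_g, ∂_{r*}] = ( ((r−3M)p_t)/(r²Ω²) + ((r−3M)p_{r*}²)/(r²Ω²p_t) )·∂_t − 2((r−3M)/(r²Ω²))·p_{r*}·∂_{r*} + Ω²·((r−6M)/r⁵)·ℓ²·∂_{p_{r*}} + (2Ω²/r)·𝕏_g, and [𝕏_g, ∂_{p_{r*}}] = (p_{r*}/(Ω²p_t))·∂_t − (1/Ω²)·∂_{r*}. -/

import Mathlib

open Real

noncomputable section

namespace SchwVlasov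

/-- Points of the null-shell chart: coordinates `(t, r, θ, φ, p_{r*}, p_θ, p_φ)`. -/
abbrev Pt : Type := Fin 7 → ℝ

/-- The null-shell chart `U`: `r > 2M`, `θ ∈ (0, π)`, `p_θ² + p_φ²/sin²θ > 0`. -/
def U (M : ℝ) : Set Pt :=
  {x | 2 * M < x 1 ∧ 0 < x 2 ∧ x 2 < Real.pi ∧
    0 < (x 5) ^ 2 + (x 6) ^ 2 / (Real.sin (x 2)) ^ 2}

/-- The Lie bracket `[V, W](x) = DW(x)·V(x) − DV(x)·W(x)` of vector fields on `ℝ⁷`. -/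
def lieBracket (V W : Pt → Pt) (x : Pt) : Pt :=
  fderiv ℝ W x (V x) - fderiv ℝ V x (W x)

/-- `Ω²(r) = 1 − 2M/r`. -/
def Om2 (M : ℝ) (x : Pt) : ℝ := 1 - 2 * M / x 1

/-- `Ω(r) = (1 − 2M/r)^{1/2}`. -/
def Om (M : ℝ) (x : Pt) : ℝ := Real.sqrt (Om2 M x)

/-- The total angular momentum `ℓ = (p_θ² + p_φ²/sin²θ)^{1/2}`. -/
def ell (x : Pt) : ℝ := Real.sqrt ((x 5) ^ 2 + (x 6) ^ 2 / (Real.sin (x 2)) ^ 2)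

/-- `p_t = −(p_{r*}² + Ω²ℓ²/r²)^{1/2}`. -/
def ptm (M : ℝ) (x : Pt) : ℝ := -Real.sqrt ((x 4) ^ 2 + Om2 M x * (ell x) ^ 2 / (x 1) ^ 2)

/-- The coordinate vector field `∂_t`. -/
def dt : Pt := ![1, 0, 0, 0, 0, 0, 0]
/-- The coordinate vector field `∂_r`. -/
def dr : Pt := ![0, 1, 0, 0, 0, 0, 0]
/-- The coordinate vector field `∂_θ`. -/
def dth : Pt := ![0, 0, 1, 0, 0, 0, 0]
/-- The coordinate vector field `∂_φ`. -/
def dph : Pt := ![0, 0, 0, 1, 0, 0, 0]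
/-- The coordinate vector field `∂_{p_{r*}}`. -/
def dpr : Pt := ![0, 0, 0, 0, 1, 0, 0]
/-- The coordinate vector field `∂_{p_θ}`. -/
def dpth : Pt := ![0, 0, 0, 0, 0, 1, 0]

/-- The tortoise radial derivative `∂_{r*} = Ω²·∂_r`, viewed as a vector field. -/
def drstar (M : ℝ) (x : Pt) : Pt := Om2 M x • dr

/-- The geodesic spray `𝕏_g`. -/
def Xg (M : ℝ) (x : Pt) : Pt :=
  (-(ptm M x) / Om2 M x) • dt + (x 4 / Om2 M x) • drstar M x
    + (x 5 / (x 1) ^ 2) • dth + (x 6 / ((x 1) ^ 2 * (Real.sin (x 2)) ^ 2)) • dph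
    + ((x 1 - 3 * M) / (x 1) ^ 4 * (ell x) ^ 2) • dpr
    + (Real.cos (x 2) / ((x 1) ^ 2 * (Real.sin (x 2)) ^ 3) * (x 6) ^ 2) • dpth

private lemma cv0 (a₀ a₁ a₂ a₃ a₄ a₅ a₆ : ℝ) : (![a₀,a₁,a₂,a₃,a₄,a₅,a₆] : Pt) 0 = a₀ := rfl
private lemma cv1 (a₀ a₁ a₂ a₃ a₄ a₅ a₆ : ℝ) : (![a₀,a₁,a₂,a₃,a₄,a₅,a₆] : Pt) 1 = a₁ := rfl
private lemma cv2 (a₀ a₁ a₂ a₃ a₄ a₅ a₆ : ℝ) : (![a₀,a₁,a₂,a₃,a₄,a₅,a₆] : Pt) 2 = a₂ := rfl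
private lemma cv3 (a₀ a₁ a₂ a₃ a₄ a₅ a₆ : ℝ) : (![a₀,a₁,a₂,a₃,a₄,a₅,a₆] : Pt) 3 = a₃ := rfl
private lemma cv4 (a₀ a₁ a₂ a₃ a₄ a₅ a₆ : ℝ) : (![a₀,a₁,a₂,a₃,a₄,a₅,a₆] : Pt) 4 = a₄ := rfl
private lemma cv5 (a₀ a₁ a₂ a₃ a₄ a₅ a₆ : ℝ) : (![a₀,a₁,a₂,a₃,a₄,a₅,a₆] : Pt) 5 = a₅ := rfl
private lemma cv6 (a₀ a₁ a₂ a₃ a₄ a₅ a₆ : ℝ) : (![a₀,a₁,a₂,a₃,a₄,a₅,a₆] : Pt) 6 = a₆ := rfl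

private lemma cw0 (a₀ a₁ a₂ a₃ a₄ a₅ a₆ : ℝ) (h : 0 < 7) : (![a₀,a₁,a₂,a₃,a₄,a₅,a₆] : Pt) ⟨0, h⟩ = a₀ := rfl
private lemma cw1 (a₀ a₁ a₂ a₃ a₄ a₅ a₆ : ℝ) (h : 1 < 7) : (![a₀,a₁,a₂,a₃,a₄,a₅,a₆] : Pt) ⟨1, h⟩ = a₁ := rfl
private lemma cw2 (a₀ a₁ a₂ a₃ a₄ a₅ a₆ : ℝ) (h : 2 < 7) : (![a₀,a₁,a₂,a₃,a₄,a₅,a₆] : Pt) ⟨2, h⟩ = a₂ := rfl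
private lemma cw3 (a₀ a₁ a₂ a₃ a₄ a₅ a₆ : ℝ) (h : 3 < 7) : (![a₀,a₁,a₂,a₃,a₄,a₅,a₆] : Pt) ⟨3, h⟩ = a₃ := rfl
private lemma cw4 (a₀ a₁ a₂ a₃ a₄ a₅ a₆ : ℝ) (h : 4 < 7) : (![a₀,a₁,a₂,a₃,a₄,a₅,a₆] : Pt) ⟨4, h⟩ = a₄ := rfl
private lemma cw5 (a₀ a₁ a₂ a₃ a₄ a₅ a₆ : ℝ) (h : 5 < 7) : (![a₀,a₁,a₂,a₃,a₄,a₅,a₆] : Pt) ⟨5, h⟩ = a₅ := rfl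
private lemma cw6 (a₀ a₁ a₂ a₃ a₄ a₅ a₆ : ℝ) (h : 6 < 7) : (![a₀,a₁,a₂,a₃,a₄,a₅,a₆] : Pt) ⟨6, h⟩ = a₆ := rfl

theorem fdDiv {c d : Pt → ℝ} {c' d' : Pt →L[ℝ] ℝ} {x : Pt}
    (hc : HasFDerivAt c c' x) (hd : HasFDerivAt d d' x) (hne : d x ≠ 0) :
    HasFDerivAt (fun y => c y / d y) ((d x)⁻¹ • c' - (c x / d x ^ 2) • d') x := by
  have hinv : HasFDerivAt (fun y => (d y)⁻¹) ((-(d x ^ 2)⁻¹) • d') x :=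
    (hasDerivAt_inv hne).comp_hasFDerivAt x hd
  have h := hc.mul hinv
  have he : (fun y => c y / d y) = fun y => c y * (d y)⁻¹ := by
    funext y; rw [div_eq_mul_inv]
  rw [he]
  refine h.congr_fderiv ?_
  ext v
  simp only [ContinuousLinearMap.coe_sub', ContinuousLinearMap.coe_add',
    Pi.sub_apply, Pi.add_apply, ContinuousLinearMap.coe_smul', Pi.smul_apply,
    smul_eq_mul]
  field_simp
  ring

theorem fdPow {f : Pt → ℝ} {f' : Pt →L[ℝ] ℝ} {x : Pt}
    (hf : HasFDerivAt f f' x) (n : ℕ) :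
    HasFDerivAt (fun y => f y ^ n) (((n : ℝ) * f x ^ (n - 1)) • f') x :=
  (hasDerivAt_pow n (f x)).comp_hasFDerivAt x hf

set_option maxHeartbeats 2000000

/-- the Lie bracket identities for `[𝕏_g, ∂_{r*}]` and `[𝕏_g, ∂_{p_{r*}}]`
on the null-shell chart. -/
theorem bracket_Xg_drstar_dpr (M : ℝ) (hM : 0 < M) (x : Pt) (hx : x ∈ U M) :
    lieBracket (Xg M) (drstar M) x
      = ((x 1 - 3 * M) * ptm M x / ((x 1) ^ 2 * Om2 M x)
          + (x 1 - 3 * M) * (x 4) ^ 2 / ((x 1) ^ 2 * Om2 M x * ptm M x)) • dt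
        - (2 * ((x 1 - 3 * M) / ((x 1) ^ 2 * Om2 M x)) * x 4) • drstar M x
        + (Om2 M x * ((x 1 - 6 * M) / (x 1) ^ 5) * (ell x) ^ 2) • dpr
        + (2 * Om2 M x / x 1) • Xg M x ∧
    lieBracket (Xg M) (fun _ => dpr) x
      = (x 4 / (Om2 M x * ptm M x)) • dt - (1 / Om2 M x) • drstar M x := by
  obtain ⟨hr2M, hth0, hthpi, hS⟩ := hx
  have hr : 0 < x 1 := lt_trans (by positivity) hr2M
  have hW : 0 < Om2 M x := by
    have : 2 * M / x 1 < 1 := (div_lt_one hr).2 hr2M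
    simp only [Om2]; linarith
  have hsin : 0 < Real.sin (x 2) := Real.sin_pos_of_pos_of_lt_pi hth0 hthpi
  have hellsq : ell x ^ 2 = (x 5) ^ 2 + (x 6) ^ 2 / (Real.sin (x 2)) ^ 2 :=
    Real.sq_sqrt hS.le
  have hQ0 : 0 < (x 4) ^ 2 + Om2 M x * (ell x) ^ 2 / (x 1) ^ 2 := by
    have h1 : 0 < Om2 M x * (ell x) ^ 2 / (x 1) ^ 2 := by
      rw [hellsq]; positivity
    positivity
  have hptmneg : ptm M x < 0 := by
    simp only [ptm, neg_neg, neg_lt_zero]; exact Real.sqrt_pos.2 hQ0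
  have hptmsq : ptm M x ^ 2 = (x 4) ^ 2 + Om2 M x * (ell x) ^ 2 / (x 1) ^ 2 := by
    rw [ptm, neg_pow]; simpa using Real.sq_sqrt hQ0.le
  -- coordinate derivatives
  have hi : ∀ i : Fin 7, HasFDerivAt (fun y : Pt => y i)
      (ContinuousLinearMap.proj (R := ℝ) (φ := fun _ : Fin 7 => ℝ) i) x :=
    fun i => hasFDerivAt_apply i x
  -- Om2
  have hOm2raw := (hasFDerivAt_const (1 : ℝ) x).sub
    (fdDiv (hasFDerivAt_const (2 * M) x) (hi 1) hr.ne')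
  have hOm2 : HasFDerivAt (Om2 M) _ x := hOm2raw
  have hdrstar : HasFDerivAt (drstar M) _ x := hOm2.smul_const dr
  -- angular-momentum square S and ell
  have hsin2ne : Real.sin (x 2) ^ 2 ≠ 0 := by positivity
  have hSf : HasFDerivAt
      (fun y : Pt => (y 5) ^ 2 + (y 6) ^ 2 / (Real.sin (y 2)) ^ 2) _ x :=
    (fdPow (hi 5) 2).add (fdDiv (fdPow (hi 6) 2) (fdPow ((hi 2).sin) 2) hsin2ne)
  have hell : HasFDerivAt ell _ x := hSf.sqrt hS.ne'
  have hell2 : HasFDerivAt (fun y => ell y ^ 2) _ x := fdPow hell 2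
  have hr2ne : (x 1) ^ 2 ≠ 0 := by positivity
  have hQf : HasFDerivAt
      (fun y : Pt => (y 4) ^ 2 + Om2 M y * ell y ^ 2 / (y 1) ^ 2) _ x :=
    (fdPow (hi 4) 2).add (fdDiv (hOm2.mul hell2) (fdPow (hi 1) 2) hr2ne)
  have hptm : HasFDerivAt (ptm M) _ x := (hQf.sqrt hQ0.ne').neg
  -- coefficients of Xg
  have hc0 : HasFDerivAt (fun y => -(ptm M y) / Om2 M y) _ x :=
    fdDiv hptm.neg hOm2 hW.ne'
  have hc1 : HasFDerivAt (fun y => y 4 / Om2 M y) _ x := fdDiv (hi 4) hOm2 hW.ne'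
  have hc2 : HasFDerivAt (fun y => y 5 / (y 1) ^ 2) _ x :=
    fdDiv (hi 5) (fdPow (hi 1) 2) hr2ne
  have hden3 : (x 1) ^ 2 * Real.sin (x 2) ^ 2 ≠ 0 := by positivity
  have hc3 : HasFDerivAt (fun y => y 6 / ((y 1) ^ 2 * (Real.sin (y 2)) ^ 2)) _ x :=
    fdDiv (hi 6) ((fdPow (hi 1) 2).mul (fdPow ((hi 2).sin) 2)) hden3
  have hr4ne : (x 1) ^ 4 ≠ 0 := by positivity
  have hc4 : HasFDerivAt (fun y => (y 1 - 3 * M) / (y 1) ^ 4 * ell y ^ 2) _ x :=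
    (fdDiv ((hi 1).sub (hasFDerivAt_const (3 * M) x)) (fdPow (hi 1) 4) hr4ne).mul hell2
  have hden5 : (x 1) ^ 2 * Real.sin (x 2) ^ 3 ≠ 0 := by positivity
  have hc5 : HasFDerivAt
      (fun y => Real.cos (y 2) / ((y 1) ^ 2 * (Real.sin (y 2)) ^ 3) * (y 6) ^ 2) _ x :=
    (fdDiv ((hi 2).cos) ((fdPow (hi 1) 2).mul (fdPow ((hi 2).sin) 3)) hden5).mul
      (fdPow (hi 6) 2)
  have hXg : HasFDerivAt (Xg M) _ x :=
    (((((hc0.smul_const dt).add (hc1.smul hdrstar)).add (hc2.smul_const dth)).add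
      (hc3.smul_const dph)).add (hc4.smul_const dpr)).add (hc5.smul_const dpth)
  have hWu : (0:ℝ) < 1 - 2 * M / x 1 := hW
  have hWne : (1:ℝ) - 2 * M / x 1 ≠ 0 := ne_of_gt hW
  have hrne : x 1 ≠ 0 := hr.ne'
  have hsne : Real.sin (x 2) ≠ 0 := hsin.ne'
  have hQu : 0 < x 4 ^ 2 + (1 - 2 * M / x 1) * (x 5 ^ 2 + x 6 ^ 2 / Real.sin (x 2) ^ 2) / x 1 ^ 2 := by
    have h := hQ0; rw [hellsq] at h; simpa [Om2] using h
  have hK2 : Real.sqrt (x 4 ^ 2 + (1 - 2 * M / x 1) * (x 5 ^ 2 + x 6 ^ 2 / Real.sin (x 2) ^ 2) / x 1 ^ 2) ^ 2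
      = x 4 ^ 2 + (1 - 2 * M / x 1) * (x 5 ^ 2 + x 6 ^ 2 / Real.sin (x 2) ^ 2) / x 1 ^ 2 :=
    Real.sq_sqrt hQu.le
  have hKpos : 0 < Real.sqrt (x 4 ^ 2 + (1 - 2 * M / x 1) * (x 5 ^ 2 + x 6 ^ 2 / Real.sin (x 2) ^ 2) / x 1 ^ 2) :=
    Real.sqrt_pos.2 hQu
  have hKne : Real.sqrt (x 4 ^ 2 + (1 - 2 * M / x 1) * (x 5 ^ 2 + x 6 ^ 2 / Real.sin (x 2) ^ 2) / x 1 ^ 2) ≠ 0 :=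
    ne_of_gt hKpos
  have h2M0 : 0 < x 1 - 2 * M := by linarith
  have h6 : 0 < x 5 ^ 2 * Real.sin (x 2) ^ 2 + x 6 ^ 2 := by
    have h := mul_pos hS (pow_pos hsin 2)
    rw [add_mul, div_mul_cancel₀ _ hsin2ne] at h
    exact h
  have hD : 0 < x 4 ^ 2 * (x 1 * Real.sin (x 2) ^ 2 * x 1 ^ 2)
      + (x 1 - 2 * M) * (x 5 ^ 2 * Real.sin (x 2) ^ 2 + x 6 ^ 2) :=
    add_pos_of_nonneg_of_pos (by positivity) (mul_pos h2M0 h6)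
  have hsDne : Real.sqrt (x 4 ^ 2 * (x 1 * Real.sin (x 2) ^ 2 * x 1 ^ 2)
      + (x 1 - 2 * M) * (x 5 ^ 2 * Real.sin (x 2) ^ 2 + x 6 ^ 2)) ≠ 0 :=
    ne_of_gt (Real.sqrt_pos.2 hD)
  have hsD2 : Real.sqrt (x 4 ^ 2 * (x 1 * Real.sin (x 2) ^ 2 * x 1 ^ 2)
      + (x 1 - 2 * M) * (x 5 ^ 2 * Real.sin (x 2) ^ 2 + x 6 ^ 2)) ^ 2
      = x 4 ^ 2 * (x 1 * Real.sin (x 2) ^ 2 * x 1 ^ 2)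
      + (x 1 - 2 * M) * (x 5 ^ 2 * Real.sin (x 2) ^ 2 + x 6 ^ 2) :=
    Real.sq_sqrt hD.le
  have hWf : (1:ℝ) - 2 * M / x 1 = (x 1 - 2 * M) / x 1 := by field_simp
  have h2Mne : x 1 - 2 * M ≠ 0 := by intro h; nlinarith
  constructor
  · rw [lieBracket, hXg.fderiv, hdrstar.fderiv]
    clear hc0 hc1 hc2 hc3 hc4 hc5 hptm hQf hell hell2 hSf hOm2raw hOm2 hdrstar hXg hi
    funext i
    simp only [ContinuousLinearMap.add_apply, ContinuousLinearMap.coe_sub',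
      ContinuousLinearMap.coe_add', ContinuousLinearMap.coe_smul',
      ContinuousLinearMap.coe_neg', ContinuousLinearMap.neg_apply,
      ContinuousLinearMap.smulRight_apply, ContinuousLinearMap.proj_apply,
      ContinuousLinearMap.smul_apply, ContinuousLinearMap.sub_apply,
      ContinuousLinearMap.zero_apply, ContinuousLinearMap.coe_zero,
      Pi.sub_apply, Pi.add_apply, Pi.smul_apply, Pi.neg_apply, Pi.zero_apply,
      smul_eq_mul, Xg, drstar, Om2, ell, ptm, dt, dr, dth, dph, dpr, dpth,
      cv0, cv1, cv2, cv3, cv4, cv5, cv6]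
    fin_cases i <;>
      simp only [cv0, cv1, cv2, cv3, cv4, cv5, cv6, cw0, cw1, cw2, cw3, cw4, cw5, cw6, Pi.add_apply, Pi.sub_apply,
        Pi.smul_apply, smul_eq_mul, mul_zero, zero_mul, mul_one, add_zero,
        zero_add, sub_zero, zero_sub, neg_zero, neg_neg, Nat.cast_ofNat,
        pow_one]
    · -- component 0
      simp only [Real.sq_sqrt hS.le]
      simp only [hWf] at hK2 hKne ⊢
      have hb2 : Real.sqrt (x 1) ^ 2 = x 1 := Real.sq_sqrt hr.le
      field_simp
      have hN : 0 ≤ (x 1 ^ 3 * x 4 ^ 2 * Real.sin (x 2) ^ 2 + (x 1 - 2 * M) * (x 5 ^ 2 * Real.sin (x 2) ^ 2 + x 6 ^ 2)) / (x 1 ^ 3 * Real.sin (x 2) ^ 2) :=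
        div_nonneg (add_nonneg (by positivity) (mul_nonneg h2M0.le h6.le)) (by positivity)
      rw [Real.sq_sqrt hN]
      field_simp
      ring
    · simp only [hWf]; field_simp; ring
    · simp only [hWf]; field_simp; ring
    · simp only [hWf]; field_simp; ring
    · simp only [Real.sq_sqrt hS.le, hWf]; field_simp; ring
    · simp only [hWf, Pi.mul_apply]; field_simp; ring
  · rw [lieBracket, hXg.fderiv, fderiv_fun_const]
    clear hc0 hc1 hc2 hc3 hc4 hc5 hptm hQf hell hell2 hSf hOm2raw hOm2 hdrstar hXg hi
    funext i
    simp only [ContinuousLinearMap.add_apply, ContinuousLinearMap.coe_sub',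
      ContinuousLinearMap.coe_add', ContinuousLinearMap.coe_smul',
      ContinuousLinearMap.coe_neg', ContinuousLinearMap.neg_apply,
      ContinuousLinearMap.smulRight_apply, ContinuousLinearMap.proj_apply,
      ContinuousLinearMap.smul_apply, ContinuousLinearMap.sub_apply,
      ContinuousLinearMap.zero_apply, ContinuousLinearMap.coe_zero,
      Pi.sub_apply, Pi.add_apply, Pi.smul_apply, Pi.neg_apply, Pi.zero_apply,
      smul_eq_mul, Xg, drstar, Om2, ell, ptm, dt, dr, dth, dph, dpr, dpth,
      cv0, cv1, cv2, cv3, cv4, cv5, cv6]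
    fin_cases i <;>
      simp only [cv0, cv1, cv2, cv3, cv4, cv5, cv6, cw0, cw1, cw2, cw3, cw4, cw5, cw6, Pi.add_apply, Pi.sub_apply,
        Pi.smul_apply, smul_eq_mul, mul_zero, zero_mul, mul_one, add_zero,
        zero_add, sub_zero, zero_sub, neg_zero, neg_neg, Nat.cast_ofNat,
        pow_one]
    · -- component 0
      simp only [Real.sq_sqrt hS.le]
      simp only [hWf] at hK2 hKne ⊢
      field_simp
      ring
    · simp only [hWf]; field_simp



end SchwVlasov
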